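/- Let T_0 be a subset of I = I_0 ∖ {0} and set w = a − σ(T_0), where σ(T_0) = Σ_{t ∈ T_0} a_t. Then G(q^{−(w+1)}) = Σ_T (−1)^{w + |T|} q^{L*(T)} (q)_w (q)_{a−w} / ((q)_{a_1} ⋯ (q)_{a_n}), where the sum ranges over all T ⊆ I with Σ_{t ∈ T} a_t = σ(T_0), and for each such T, with w_i = a_i for i ∉ T and w_i = 0 for i ∈ T (1 ≤ i ≤ n), L*(T) = Σ_{l ∈ I} Σ_{i=l}^{n} w_i − Σ_{l=1}^{ν} p_l Σ_{i=j_l}^{n} w_i − (w+1 choose 2) − 1. -/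

import Mathlib

/- Evaluation of the rational function G(X) at X = q^{-(w+1)}. -/
open Finset

noncomputable section

abbrev K : Type := RatFunc ℚ

/-- the field `ℚ(q)(X)`. -/
abbrev KX : Type := RatFunc K

/-- the indeterminate `q`. -/
def q : K := RatFunc.X

/-- the indeterminate `X`. -/
def XX : KX := RatFunc.X

/-- constants `ℚ(q) → ℚ(q)(X)`. -/
def CK : K →+* KX := RatFunc.C

/-- `(q)_k`. -/
def qfac (k : ℕ) : K := ∏ t ∈ range k, (1 - q ^ (t + 1))

/-- `σ'(T) = ∑_{t ∈ T, t ≠ 0} a_t`. -/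
def sigma' (a : ℕ → ℕ) (T : Finset ℕ) : ℕ := ∑ t ∈ T.erase 0, a t

/-- `w i = a i` for `i ∉ T` and `w i = 0` for `i ∈ T`. -/
def wgt (a : ℕ → ℕ) (T : Finset ℕ) (t : ℕ) : ℕ := if t ∈ T then 0 else a t

/-- `L̃(T) = ∑_{l ∈ I₀} ∑_{i=max(l,1)}^n w_i − ∑_{l=1}^ν p_l ∑_{i=j_l}^n w_i`. -/
def Ltil (n : ℕ) {m ν : ℕ} (i : Fin m → ℕ) (j p : Fin ν → ℕ) (a : ℕ → ℕ)
    (T : Finset ℕ) : ℤ :=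
  (∑ l ∈ Finset.image i univ, ∑ t ∈ Icc (max l 1) n, (wgt a T t : ℤ))
    - ∑ k : Fin ν, (p k : ℤ) * ∑ t ∈ Icc (j k) n, (wgt a T t : ℤ)

/-- the rational function
`G(X) = (∏_{i=1}^a (1 - X q^i) / ((q)_{a₁}⋯(q)_{aₙ})) ∑_{∅≠T⊆I₀} (-1)^{|T|} q^{L̃(T)} S_T(X)`,
where `S_T(X) = (1 - X q^{σ'(T)})/(1 - q^{1+a-σ'(T)})` if `0 ∈ T`, and
`S_T(X) = X (1 - q^{σ'(T)})/(1 - X q^{1+a-σ'(T)})` if `0 ∉ T`. -/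
def G (n : ℕ) {m ν : ℕ} (i : Fin m → ℕ) (j p : Fin ν → ℕ) (a : ℕ → ℕ) : KX :=
  ((∏ t ∈ range (∑ k ∈ Icc 1 n, a k), (1 - XX * CK (q ^ (t + 1)))) /
      CK (∏ k ∈ Icc 1 n, qfac (a k))) *
    ∑ T ∈ (Finset.image i univ).powerset.filter (fun T => T.Nonempty),
      (-1 : KX) ^ T.card * CK (q ^ Ltil n i j p a T) *
        (if (0 : ℕ) ∈ T then
          (1 - XX * CK (q ^ sigma' a T)) /
            CK (1 - q ^ ((1 + ∑ k ∈ Icc 1 n, a k : ℤ) - sigma' a T))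
        else
          XX * CK (1 - q ^ sigma' a T) /
            (1 - XX * CK (q ^ ((1 + ∑ k ∈ Icc 1 n, a k : ℤ) - sigma' a T))))

/-- `L*(T) = ∑_{l ∈ I} ∑_{i=l}^n w_i − ∑_{l=1}^ν p_l ∑_{i=j_l}^n w_i − C(w+1,2) − 1`. -/
def Lstar (n : ℕ) {m ν : ℕ} (i : Fin m → ℕ) (j p : Fin ν → ℕ) (a : ℕ → ℕ)
    (w : ℕ) (T : Finset ℕ) : ℤ :=
  (∑ l ∈ (Finset.image i univ).erase 0, ∑ t ∈ Icc l n, (wgt a T t : ℤ))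
    - (∑ k : Fin ν, (p k : ℤ) * ∑ t ∈ Icc (j k) n, (wgt a T t : ℤ))
    - (Nat.choose (w+1) 2 : ℤ) - 1

-- nonvanishing facts
lemma q_ne_zero : q ≠ 0 := RatFunc.X_ne_zero

lemma q_pow_ne_one {k : ℕ} (hk : k ≠ 0) : q ^ k ≠ 1 := by
  intro h
  have h2 : (algebraMap (Polynomial ℚ) K) (Polynomial.X ^ k) = algebraMap (Polynomial ℚ) K 1 := by
    simpa [q, RatFunc.algebraMap_X] using h
  have := RatFunc.algebraMap_injective ℚ h2
  have := congrArg Polynomial.natDegree this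
  simp at this
  exact hk this

lemma q_zpow_ne_one {k : ℤ} (hk : k ≠ 0) : q ^ k ≠ 1 := by
  rcases lt_trichotomy k 0 with h | h | h
  · intro hh
    have : q ^ (-k) = 1 := by
      rw [zpow_neg, hh, inv_one]
    rw [show (-k) = ((-k).toNat : ℤ) by omega, zpow_natCast] at this
    exact q_pow_ne_one (by omega) this
  · omega
  · rw [show k = (k.toNat : ℤ) by omega, zpow_natCast]
    exact q_pow_ne_one (by omega)

lemma one_sub_q_zpow_ne_zero {k : ℤ} (hk : k ≠ 0) : 1 - q ^ k ≠ 0 :=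
  fun h => q_zpow_ne_one hk (by linear_combination -h)

lemma one_sub_q_pow_ne_zero {k : ℕ} (hk : k ≠ 0) : 1 - q ^ k ≠ 0 :=
  fun h => q_pow_ne_one hk (by linear_combination -h)

lemma qfac_ne_zero (k : ℕ) : qfac k ≠ 0 :=
  prod_ne_zero_iff.mpr (fun t _ => one_sub_q_pow_ne_zero (Nat.succ_ne_zero t))

/-- `1 - q^{-k} = -q^{-k} (1 - q^k)`. -/
lemma one_sub_q_zpow_neg (k : ℤ) : 1 - q ^ (-k) = -q ^ (-k) * (1 - q ^ k) := by
  have h : q ^ (-k) * q ^ k = 1 := by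
    rw [← zpow_add₀ q_ne_zero]; simp
  ring_nf
  linear_combination -h

/-- `∏_{v=1}^{k} (1 - q^{-v}) = (-1)^k q^{-C(k+1,2)} (q)_k`. -/
lemma negprod (k : ℕ) : ∏ v ∈ range k, (1 - q ^ (-(v + 1 : ℤ))) =
    (-1) ^ k * q ^ (-(Nat.choose (k + 1) 2 : ℤ)) * qfac k := by
  induction k with
  | zero => simp [qfac]
  | succ k ih =>
    have hf : qfac (k + 1) = qfac k * (1 - q ^ (k + 1)) := by
      rw [qfac, prod_range_succ]; rfl
    have hfac : (1 : K) - q ^ (-((k : ℤ) + 1)) = -q ^ (-((k : ℤ) + 1)) * (1 - q ^ (k + 1)) := by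
      rw [one_sub_q_zpow_neg ((k : ℤ) + 1)]
      norm_cast
    have hq : q ^ (-(Nat.choose (k + 1) 2 : ℤ)) * q ^ (-((k : ℤ) + 1))
        = q ^ (-(Nat.choose (k + 2) 2 : ℤ)) := by
      rw [← zpow_add₀ q_ne_zero]
      congr 1
      have h2 : (k + 2).choose 2 = (k + 1).choose 2 + (k + 1) := by
        rw [Nat.choose_succ_succ (k + 1) 1, Nat.choose_one_right]
        simp [Nat.succ_eq_add_one]
        omega
      omega
    rw [prod_range_succ, ih, hfac, hf, pow_succ]
    linear_combination ((-1 : K) ^ k * qfac k * (1 - q ^ (k + 1)) * (-1)) * hq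

lemma choose_two_succ (k : ℕ) : (k + 2).choose 2 = (k + 1).choose 2 + (k + 1) := by
  rw [Nat.choose_succ_succ (k + 1) 1, Nat.choose_one_right]
  simp [Nat.succ_eq_add_one]
  omega

/-! ### Evaluation certificates -/

/-- `Ev x f v` certifies that the rational function `f : KX` can be written with a
denominator not vanishing at `x`, with value `v` at `x`. -/
def Ev (x : K) (f : KX) (v : K) : Prop :=
  ∃ p r : Polynomial K, r.eval x ≠ 0 ∧
    f = algebraMap (Polynomial K) KX p / algebraMap (Polynomial K) KX r ∧
    v = p.eval x / r.eval x

variable {x : K}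

lemma Ev.eval {f : KX} {v : K} (h : Ev x f v) :
    RatFunc.eval (RingHom.id K) x f = v := by
  obtain ⟨p, r, hr, hf, hv⟩ := h
  have hr0 : r ≠ 0 := fun h0 => hr (by rw [h0]; simp)
  have hdvd : f.denom ∣ r := by rw [hf]; exact RatFunc.denom_div_dvd p r
  have hde : f.denom.eval x ≠ 0 := by
    obtain ⟨c, hc⟩ := hdvd
    intro h0
    rw [hc, Polynomial.eval_mul, h0, zero_mul] at hr
    exact hr rfl
  have hkey : f.num * r = p * f.denom := (RatFunc.num_mul_eq_mul_denom_iff hr0).mpr hf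
  have hkey2 := congrArg (Polynomial.eval x) hkey
  rw [Polynomial.eval_mul, Polynomial.eval_mul] at hkey2
  rw [RatFunc.eval]
  rw [show Polynomial.eval₂ (RingHom.id K) x = Polynomial.eval x from rfl, hv]
  field_simp
  linear_combination hkey2

lemma Ev_C (c : K) : Ev x (CK c) c := by
  refine ⟨Polynomial.C c, 1, by simp, ?_, by simp⟩
  rw [map_one, div_one, CK, ← RatFunc.algebraMap_C]

lemma Ev_X : Ev x XX x := by
  refine ⟨Polynomial.X, 1, by simp, ?_, by simp⟩
  rw [map_one, div_one, XX, ← RatFunc.algebraMap_X]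

lemma Ev_zero : Ev x 0 0 := by simpa using Ev_C 0

lemma Ev_one : Ev x 1 1 := by simpa using Ev_C 1

lemma Ev.add {f g : KX} {v w : K} (hf : Ev x f v) (hg : Ev x g w) : Ev x (f + g) (v + w) := by
  obtain ⟨p, r, hr, hfe, hve⟩ := hf
  obtain ⟨p', r', hr', hge, hwe⟩ := hg
  have hr0 : (algebraMap (Polynomial K) KX) r ≠ 0 :=
    RatFunc.algebraMap_ne_zero (fun h0 => hr (by rw [h0]; simp))
  have hr0' : (algebraMap (Polynomial K) KX) r' ≠ 0 :=
    RatFunc.algebraMap_ne_zero (fun h0 => hr' (by rw [h0]; simp))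
  refine ⟨p * r' + p' * r, r * r', by simp [hr, hr'], ?_, ?_⟩
  · rw [hfe, hge]
    field_simp
    simp only [map_mul, map_add]
    try ring
  · rw [hve, hwe]
    simp only [Polynomial.eval_add, Polynomial.eval_mul]
    field_simp
    try ring

lemma Ev.mul {f g : KX} {v w : K} (hf : Ev x f v) (hg : Ev x g w) : Ev x (f * g) (v * w) := by
  obtain ⟨p, r, hr, hfe, hve⟩ := hf
  obtain ⟨p', r', hr', hge, hwe⟩ := hg
  refine ⟨p * p', r * r', by simp [hr, hr'], ?_, ?_⟩
  · rw [hfe, hge, map_mul, map_mul]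
    ring
  · rw [hve, hwe]
    simp only [Polynomial.eval_mul]
    field_simp

lemma Ev.neg {f : KX} {v : K} (hf : Ev x f v) : Ev x (-f) (-v) := by
  obtain ⟨p, r, hr, hfe, hve⟩ := hf
  exact ⟨-p, r, hr, by rw [hfe, map_neg]; exact (neg_div _ _).symm,
    by rw [hve]; simp [neg_div]⟩

lemma Ev.sub {f g : KX} {v w : K} (hf : Ev x f v) (hg : Ev x g w) : Ev x (f - g) (v - w) := by
  rw [sub_eq_add_neg, sub_eq_add_neg]
  exact hf.add hg.neg

lemma Ev.div {f g : KX} {v w : K} (hf : Ev x f v) (hg : Ev x g w) (hw : w ≠ 0) :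
    Ev x (f / g) (v / w) := by
  obtain ⟨p, r, hr, hfe, hve⟩ := hf
  obtain ⟨p', r', hr', hge, hwe⟩ := hg
  have hp' : p'.eval x ≠ 0 := by
    intro h0
    rw [hwe, h0, zero_div] at hw
    exact hw rfl
  refine ⟨p * r', r * p', by simp [hr, hp'], ?_, ?_⟩
  · rw [hfe, hge, map_mul, map_mul]
    rw [div_div_div_eq]
    try ring_nf
  · rw [hve, hwe]
    simp only [Polynomial.eval_mul]
    rw [div_div_div_eq]
    try ring_nf

lemma Ev_sum {α : Type*} {s : Finset α} {f : α → KX} {v : α → K}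
    (h : ∀ t ∈ s, Ev x (f t) (v t)) :
    Ev x (∑ t ∈ s, f t) (∑ t ∈ s, v t) := by
  classical
  induction s using Finset.induction_on with
  | empty => simpa using Ev_zero
  | @insert a s hns ih =>
    rw [Finset.sum_insert hns, Finset.sum_insert hns]
    exact (h a (mem_insert_self a s)).add (ih fun t ht => h t (mem_insert_of_mem ht))

lemma Ev_prod {α : Type*} {s : Finset α} {f : α → KX} {v : α → K}
    (h : ∀ t ∈ s, Ev x (f t) (v t)) :
    Ev x (∏ t ∈ s, f t) (∏ t ∈ s, v t) := by
  classical
  induction s using Finset.induction_on with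
  | empty => simpa using Ev_one
  | @insert a s hns ih =>
    rw [Finset.prod_insert hns, Finset.prod_insert hns]
    exact (h a (mem_insert_self a s)).mul (ih fun t ht => h t (mem_insert_of_mem ht))

/-! ### The main per-term evaluation -/

/-- the product prefactor of `G`. -/
def NN (A : ℕ) : KX := ∏ t ∈ range A, (1 - XX * CK (q ^ (t + 1)))

/-- the combined `T`/`T ∪ {0}` term. -/
def trm (A s : ℕ) : KX :=
  XX * CK (1 - q ^ s) / (1 - XX * CK (q ^ ((1 + A : ℤ) - s))) -
  (1 - XX * CK (q ^ s)) / CK (1 - q ^ ((1 + A : ℤ) - s))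

lemma one_sub_XX_CK_ne_zero {c : K} (hc : c ≠ 0) : (1 : KX) - XX * CK c ≠ 0 := by
  have h : (1 : KX) - XX * CK c =
      algebraMap (Polynomial K) KX (1 - Polynomial.X * Polynomial.C c) := by
    rw [map_sub, map_one, map_mul, RatFunc.algebraMap_C, RatFunc.algebraMap_X]
    rfl
  rw [h]
  apply RatFunc.algebraMap_ne_zero
  intro h0
  have := congrArg (Polynomial.eval 0) h0
  simp at this

lemma prod_shift (w : ℕ) : ∏ t ∈ range w, (1 - q ^ ((t : ℤ) - w)) =
    (-1) ^ w * q ^ (-(Nat.choose (w + 1) 2 : ℤ)) * qfac w := by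
  rw [← negprod w, ← Finset.prod_range_reflect]
  apply Finset.prod_congr rfl
  intro t ht
  rw [mem_range] at ht
  congr 1
  congr 1
  omega

lemma Ev_NN_factor {x : K} (t : ℕ) :
    Ev x (1 - XX * CK (q ^ (t + 1))) (1 - x * q ^ (t + 1)) :=
  Ev_one.sub (Ev_X.mul (Ev_C _))

lemma v1_eq_v2 {A s : ℕ} (hs : s ≤ A) (hs0 : s ≠ 0) :
    (q ^ (-((A : ℤ) + 1)) * (1 - q ^ s)) / (1 - q ^ (-((A : ℤ) + 1)) * q ^ ((1 + A : ℤ) - s))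
      = (1 - q ^ (-((A : ℤ) + 1)) * q ^ s) / (1 - q ^ ((1 + A : ℤ) - s)) := by
  have e1 : (q : K) ^ (s : ℕ) = q ^ (s : ℤ) := (zpow_natCast q s).symm
  have e2 : (q : K) ^ ((1 + A : ℤ) - s) = q ^ ((A : ℤ) + 1) * (q ^ (s : ℤ))⁻¹ := by
    rw [← zpow_neg, ← zpow_add₀ q_ne_zero]
    congr 1
    ring
  have e3 : (q : K) ^ (-((A : ℤ) + 1)) = (q ^ ((A : ℤ) + 1))⁻¹ := by rw [← zpow_neg]
  have hU : (q : K) ^ ((A : ℤ) + 1) ≠ 0 := zpow_ne_zero _ q_ne_zero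
  have hz : (q : K) ^ (s : ℤ) ≠ 0 := zpow_ne_zero _ q_ne_zero
  have hd1 : (1 : K) - (q ^ ((A : ℤ) + 1))⁻¹ * (q ^ ((A : ℤ) + 1) * (q ^ (s : ℤ))⁻¹) ≠ 0 := by
    rw [inv_mul_cancel_left₀ hU, ← zpow_neg]
    exact one_sub_q_zpow_ne_zero (by omega)
  have hd2 : (1 : K) - q ^ ((A : ℤ) + 1) * (q ^ (s : ℤ))⁻¹ ≠ 0 := by
    rw [← zpow_neg, ← zpow_add₀ q_ne_zero]
    exact one_sub_q_zpow_ne_zero (by omega)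
  rw [e1, e2, e3]
  rw [div_eq_div_iff hd1 hd2]
  have hmix : (q : K) ^ s * q⁻¹ ^ s = 1 := by
    rw [← mul_pow, mul_inv_cancel₀ q_ne_zero, one_pow]
  field_simp
  have hAc : (q : K) ^ ((1 : ℤ) + A) = q ^ ((A : ℤ) + 1) := by rw [add_comm]
  linear_combination

lemma main_ev (A s₀ s : ℕ) (hs : s ≤ A) (hs₀ : s₀ ≤ A) :
    Ev (q ^ (-((A - s₀ : ℕ) + 1 : ℤ))) (NN A * trm A s)
      (if s = s₀ then
        (-1) ^ (A - s₀) * q ^ (-((A - s₀ : ℕ) + 1 : ℤ) - (Nat.choose (A - s₀ + 1) 2 : ℤ)) *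
          qfac (A - s₀) * qfac s
      else 0) := by
  set w : ℕ := A - s₀ with hw
  set x : K := q ^ (-((w : ℕ) + 1 : ℤ)) with hxdef
  have hxq : ∀ t : ℕ, x * q ^ (t + 1) = q ^ ((t : ℤ) - w) := by
    intro t
    rw [hxdef, show (q : K) ^ (t + 1) = q ^ ((t + 1 : ℕ) : ℤ) from (zpow_natCast _ _).symm,
      ← zpow_add₀ q_ne_zero]
    congr 1
    push_cast
    ring
  -- the evaluation of the prefactor
  have hNN : Ev x (NN A) (∏ t ∈ range A, (1 - x * q ^ (t + 1))) :=
    Ev_prod fun t _ => Ev_NN_factor t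
  -- the evaluation of the `0 ∈ T` part
  have hu : ((1 + A : ℤ) - s) ≠ 0 := by omega
  have hS2 : Ev x ((1 - XX * CK (q ^ s)) / CK (1 - q ^ ((1 + A : ℤ) - s)))
      ((1 - x * q ^ s) / (1 - q ^ ((1 + A : ℤ) - s))) :=
    (Ev_one.sub (Ev_X.mul (Ev_C _))).div (Ev_C _) (one_sub_q_zpow_ne_zero hu)
  by_cases hss : s = s₀
  · subst hss
    rw [if_pos rfl]
    by_cases h0 : s = 0
    · -- `s = s₀ = 0` : only the `0 ∈ T` part contributes
      subst h0
      have hw0 : w = A := by omega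
      have hx0 : x = q ^ (-((A : ℤ) + 1)) := by
        first
        | rw [hxdef, hw0]
        | rw [hxdef]
      have h1 : XX * CK (1 - q ^ (0 : ℕ)) / (1 - XX * CK (q ^ ((1 + A : ℤ) - (0 : ℕ)))) = 0 := by
        simp
      have htrm : NN A * trm A 0 =
          -(NN A * ((1 - XX * CK (q ^ (0 : ℕ))) / CK (1 - q ^ ((1 + A : ℤ) - (0 : ℕ))))) := by
        rw [trm, h1, zero_sub, mul_neg]
      rw [htrm]
      have hEv := (hNN.mul hS2).neg
      have hval : -((∏ t ∈ range A, (1 - x * q ^ (t + 1))) *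
          ((1 - x * q ^ (0 : ℕ)) / (1 - q ^ ((1 + A : ℤ) - (0 : ℕ))))) =
          (-1) ^ w * q ^ (-((w : ℕ) + 1 : ℤ) - (Nat.choose (w + 1) 2 : ℤ)) *
            qfac w * qfac 0 := by
        have hNx : ∏ t ∈ range A, (1 - x * q ^ (t + 1)) =
            (-1) ^ A * q ^ (-(Nat.choose (A + 1) 2 : ℤ)) * qfac A := by
          rw [← prod_shift A]
          refine prod_congr rfl fun t _ => ?_
          first
          | rw [hxq t, hw0]
          | rw [hxq t]
        have hxv : (1 : K) - x * q ^ (0 : ℕ) = -q ^ (-((A : ℤ) + 1)) * (1 - q ^ (A + 1)) := by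
          rw [pow_zero, mul_one, hx0, one_sub_q_zpow_neg ((A : ℤ) + 1)]
          norm_cast
        have hden : (1 : K) - q ^ ((1 + A : ℤ) - (0 : ℕ)) = 1 - q ^ (A + 1) := by
          rw [show ((1 + A : ℤ) - (0 : ℕ)) = ((A + 1 : ℕ) : ℤ) by push_cast; ring, zpow_natCast]
        have hne : (1 : K) - q ^ (A + 1) ≠ 0 := one_sub_q_pow_ne_zero (Nat.succ_ne_zero A)
        have hcomb : q ^ (-(Nat.choose (A + 1) 2 : ℤ)) * q ^ (-((A : ℤ) + 1)) =
            q ^ (-((A : ℕ) + 1 : ℤ) - (Nat.choose (A + 1) 2 : ℤ)) := by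
          rw [← zpow_add₀ q_ne_zero]
          congr 1
          ring
        have hq2 : (-q ^ (-((A : ℤ) + 1)) * (1 - q ^ (A + 1))) / (1 - q ^ (A + 1)) =
            -q ^ (-((A : ℤ) + 1)) := by
          rw [mul_div_assoc, div_self hne, mul_one]
        rw [hNx, hxv, hden, hq2, hw0, show qfac 0 = 1 by simp [qfac], mul_one]
        linear_combination ((-1 : K) ^ A * qfac A) * hcomb
      rw [← hval]
      exact hEv
    · -- `s = s₀ ≥ 1` : the pole cancels against the zero of the prefactor
      have hwA : w < A := by omega
      have hfw : (1 : KX) - XX * CK (q ^ (w + 1)) ≠ 0 :=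
        one_sub_XX_CK_ne_zero (pow_ne_zero _ q_ne_zero)
      have hue : (q : K) ^ ((1 + A : ℤ) - s) = q ^ (w + 1) := by
        rw [show ((1 + A : ℤ) - s) = ((w + 1 : ℕ) : ℤ) by omega, zpow_natCast]
      have hNNsplit : NN A = (1 - XX * CK (q ^ (w + 1))) *
          ∏ t ∈ (range A).erase w, (1 - XX * CK (q ^ (t + 1))) :=
        (Finset.mul_prod_erase _ _ (mem_range.mpr hwA)).symm
      have hKX : NN A * trm A s =
          (∏ t ∈ (range A).erase w, (1 - XX * CK (q ^ (t + 1)))) * (XX * CK (1 - q ^ s)) -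
            NN A * ((1 - XX * CK (q ^ s)) / CK (1 - q ^ (w + 1))) := by
        have cancel : ∀ (a b c : KX), b ≠ 0 → b * a * (c / b) = a * c := by
          intro a b c hb
          field_simp
        rw [trm, hue, mul_sub]
        congr 1
        rw [hNNsplit]
        exact cancel _ _ _ hfw
      rw [hKX]
      have hS2' : Ev x ((1 - XX * CK (q ^ s)) / CK (1 - q ^ (w + 1)))
          ((1 - x * q ^ s) / (1 - q ^ (w + 1))) :=
        (Ev_one.sub (Ev_X.mul (Ev_C _))).div (Ev_C _)
          (one_sub_q_pow_ne_zero (Nat.succ_ne_zero w))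
      have hrest : Ev x (∏ t ∈ (range A).erase w, (1 - XX * CK (q ^ (t + 1))))
          (∏ t ∈ (range A).erase w, (1 - x * q ^ (t + 1))) :=
        Ev_prod fun t _ => Ev_NN_factor t
      have hEv := (hrest.mul (Ev_X.mul (Ev_C (1 - q ^ s)))).sub (hNN.mul hS2')
      have hval : (∏ t ∈ (range A).erase w, (1 - x * q ^ (t + 1))) * (x * (1 - q ^ s)) -
          (∏ t ∈ range A, (1 - x * q ^ (t + 1))) * ((1 - x * q ^ s) / (1 - q ^ (w + 1))) =
          (-1) ^ w * q ^ (-((w : ℕ) + 1 : ℤ) - (Nat.choose (w + 1) 2 : ℤ)) *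
            qfac w * qfac s := by
        have hNx0 : ∏ t ∈ range A, (1 - x * q ^ (t + 1)) = 0 :=
          Finset.prod_eq_zero (mem_range.mpr hwA)
            (by rw [hxq w, show ((w : ℤ) - w) = 0 by ring, zpow_zero, sub_self])
        rw [hNx0, zero_mul, sub_zero]
        -- split the product over `(range A).erase w`
        have hsplit : (range A).erase w = range w ∪ Ico (w + 1) A := by
          ext t
          simp only [mem_erase, mem_range, mem_union, mem_Ico]
          omega
        have hdisj : Disjoint (range w) (Ico (w + 1) A) := by
          rw [Finset.disjoint_left]
          intro t h1 h2
          rw [mem_range] at h1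
          rw [mem_Ico] at h2
          omega
        rw [hsplit, prod_union hdisj]
        have hp1 : ∏ t ∈ range w, (1 - x * q ^ (t + 1)) =
            (-1) ^ w * q ^ (-(Nat.choose (w + 1) 2 : ℤ)) * qfac w := by
          rw [← prod_shift w]
          exact prod_congr rfl fun t _ => by rw [hxq t]
        have hp2 : ∏ t ∈ Ico (w + 1) A, (1 - x * q ^ (t + 1)) = qfac (s - 1) := by
          rw [Finset.prod_Ico_eq_prod_range]
          have hlen : A - (w + 1) = s - 1 := by omega
          rw [hlen, qfac]
          refine prod_congr rfl fun r _ => ?_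
          rw [hxq (w + 1 + r), show ((w + 1 + r : ℕ) : ℤ) - w = ((r + 1 : ℕ) : ℤ) by push_cast; ring,
            zpow_natCast]
        rw [hp1, hp2]
        have hqf : qfac s = qfac (s - 1) * (1 - q ^ s) := by
          conv_lhs => rw [show s = (s - 1) + 1 by omega]
          rw [qfac, prod_range_succ, ← qfac, show (s - 1) + 1 = s by omega]
        have hcomb : q ^ (-(Nat.choose (w + 1) 2 : ℤ)) * x =
            q ^ (-((w : ℕ) + 1 : ℤ) - (Nat.choose (w + 1) 2 : ℤ)) := by
          rw [hxdef, ← zpow_add₀ q_ne_zero]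
          congr 1
          ring
        rw [hqf]
        linear_combination ((-1 : K) ^ w * qfac w * qfac (s - 1) * (1 - q ^ s)) * hcomb
      rw [← hval]
      exact hEv
  · -- the term evaluates to zero
    rw [if_neg hss]
    have hd1 : x * q ^ ((1 + A : ℤ) - s) = q ^ ((s₀ : ℤ) - s) := by
      rw [hxdef, ← zpow_add₀ q_ne_zero]
      congr 1
      omega
    have hd1ne : (1 : K) - x * q ^ ((1 + A : ℤ) - s) ≠ 0 := by
      rw [hd1]
      exact one_sub_q_zpow_ne_zero (by omega)
    have hS1 : Ev x (XX * CK (1 - q ^ s) / (1 - XX * CK (q ^ ((1 + A : ℤ) - s))))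
        ((x * (1 - q ^ s)) / (1 - x * q ^ ((1 + A : ℤ) - s))) :=
      (Ev_X.mul (Ev_C _)).div (Ev_one.sub (Ev_X.mul (Ev_C _))) hd1ne
    have hEv := hNN.mul (hS1.sub hS2)
    have hval : (∏ t ∈ range A, (1 - x * q ^ (t + 1))) *
        ((x * (1 - q ^ s)) / (1 - x * q ^ ((1 + A : ℤ) - s)) -
          (1 - x * q ^ s) / (1 - q ^ ((1 + A : ℤ) - s))) = 0 := by
      by_cases hs0 : s₀ = 0
      · -- the two summands agree
        have hx0 : x = q ^ (-((A : ℤ) + 1)) := by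
          rw [hxdef]
          congr 1
          omega
        rw [hx0, v1_eq_v2 hs (fun h => hss (h.trans hs0.symm)), sub_self, mul_zero]
      · -- the product vanishes
        rw [Finset.prod_eq_zero (mem_range.mpr (show w < A by omega))
          (by rw [hxq w, show ((w : ℤ) - w) = 0 by ring, zpow_zero, sub_self]), zero_mul]
    rw [← hval]
    exact hEv

section Comb

variable {n m ν : ℕ} {i : Fin m → ℕ} {j p : Fin ν → ℕ} {a : ℕ → ℕ}

lemma wgt_insert_zero (a : ℕ → ℕ) (T : Finset ℕ) {t : ℕ} (ht : t ≠ 0) :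
    wgt a (insert 0 T) t = wgt a T t := by
  simp only [wgt, mem_insert]
  rcases eq_or_ne t 0 with h | h
  · exact absurd h ht
  · simp [h]

lemma Ltil_insert_zero (hj0 : ∀ k, 0 < j k) (T : Finset ℕ) :
    Ltil n i j p a (insert 0 T) = Ltil n i j p a T := by
  unfold Ltil
  congr 1
  · refine sum_congr rfl fun l _ => sum_congr rfl fun t ht => ?_
    rw [mem_Icc] at ht
    rw [wgt_insert_zero a T (by omega)]
  · refine sum_congr rfl fun k _ => ?_
    congr 1
    refine sum_congr rfl fun t ht => ?_
    rw [mem_Icc] at ht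
    have := hj0 k
    rw [wgt_insert_zero a T (by omega)]

lemma sum_wgt (T : Finset ℕ) (hT : T ⊆ Icc 1 n) :
    ∑ t ∈ Icc 1 n, (wgt a T t : ℤ) =
      (∑ t ∈ Icc 1 n, (a t : ℤ)) - ∑ t ∈ T, (a t : ℤ) := by
  have h1 : ∑ t ∈ Icc 1 n, (wgt a T t : ℤ) =
      ∑ t ∈ Icc 1 n \ T, (wgt a T t : ℤ) + ∑ t ∈ T, (wgt a T t : ℤ) :=
    (sum_sdiff hT).symm
  have h2 : ∑ t ∈ T, (wgt a T t : ℤ) = 0 :=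
    sum_eq_zero fun t ht => by simp [wgt, ht]
  have h3 : ∑ t ∈ Icc 1 n \ T, (wgt a T t : ℤ) = ∑ t ∈ Icc 1 n \ T, (a t : ℤ) :=
    sum_congr rfl fun t ht => by
      rw [mem_sdiff] at ht
      simp [wgt, ht.2]
  have h4 : ∑ t ∈ Icc 1 n, (a t : ℤ) =
      ∑ t ∈ Icc 1 n \ T, (a t : ℤ) + ∑ t ∈ T, (a t : ℤ) := (sum_sdiff hT).symm
  linarith

lemma Ltil_eq_Lstar (h0 : (0 : ℕ) ∈ Finset.image i univ) (w : ℕ) (T : Finset ℕ)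
    (hT : T ⊆ Icc 1 n) :
    Ltil n i j p a T = Lstar n i j p a w T +
      ((∑ t ∈ Icc 1 n, (a t : ℤ)) - ∑ t ∈ T, (a t : ℤ)) +
      (Nat.choose (w + 1) 2 : ℤ) + 1 := by
  have hsum : ∑ l ∈ Finset.image i univ, ∑ t ∈ Icc (max l 1) n, (wgt a T t : ℤ) =
      ((∑ t ∈ Icc 1 n, (a t : ℤ)) - ∑ t ∈ T, (a t : ℤ)) +
        ∑ l ∈ (Finset.image i univ).erase 0, ∑ t ∈ Icc l n, (wgt a T t : ℤ) := by
    conv_lhs => rw [← Finset.insert_erase h0]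
    rw [Finset.sum_insert (notMem_erase 0 _)]
    congr 1
    · rw [show max 0 1 = 1 from rfl]
      exact sum_wgt T hT
    · refine sum_congr rfl fun l hl => ?_
      rw [mem_erase] at hl
      rw [show max l 1 = l by omega]
  unfold Ltil Lstar
  rw [hsum]
  ring

end Comb

section Restructure

variable {n m ν : ℕ} {i : Fin m → ℕ} {j p : Fin ν → ℕ} {a : ℕ → ℕ}

lemma CK_ne_zero {c : K} (hc : c ≠ 0) : CK c ≠ 0 := by
  rw [CK, ← RatFunc.algebraMap_C]
  exact RatFunc.algebraMap_ne_zero (Polynomial.C_ne_zero.mpr hc)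

lemma G_eq (hj0 : ∀ k, 0 < j k) (h0 : (0 : ℕ) ∈ Finset.image i univ) :
    G n i j p a = ∑ T ∈ ((Finset.image i univ).erase 0).powerset,
      CK ((-1) ^ T.card * q ^ Ltil n i j p a T / ∏ k ∈ Icc 1 n, qfac (a k)) *
        (NN (∑ k ∈ Icc 1 n, a k) *
          trm (∑ k ∈ Icc 1 n, a k) (∑ t ∈ T, a t)) := by
  classical
  set A := ∑ k ∈ Icc 1 n, a k with hA
  set C₀ := ∏ k ∈ Icc 1 n, qfac (a k) with hC₀
  set F : Finset ℕ → KX := fun T =>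
    (-1 : KX) ^ T.card * CK (q ^ Ltil n i j p a T) *
      (if (0 : ℕ) ∈ T then
        (1 - XX * CK (q ^ sigma' a T)) / CK (1 - q ^ ((1 + A : ℤ) - sigma' a T))
      else
        XX * CK (1 - q ^ sigma' a T) /
          (1 - XX * CK (q ^ ((1 + A : ℤ) - sigma' a T)))) with hF
  have hGdef : G n i j p a = (NN A / CK C₀) *
      ∑ T ∈ (Finset.image i univ).powerset.filter (fun T => T.Nonempty), F T := rfl
  have hF0 : F ∅ = 0 := by
    simp [hF, sigma']
  have hfilter : ∑ T ∈ (Finset.image i univ).powerset.filter (fun T => T.Nonempty), F T =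
      ∑ T ∈ (Finset.image i univ).powerset, F T := by
    refine Finset.sum_filter_of_ne fun T _ hne => ?_
    rw [Finset.nonempty_iff_ne_empty]
    intro h
    rw [h, hF0] at hne
    exact hne rfl
  have hsplit : ∑ T ∈ (Finset.image i univ).powerset, F T =
      ∑ T ∈ ((Finset.image i univ).erase 0).powerset, (F T + F (insert 0 T)) := by
    conv_lhs => rw [← Finset.insert_erase h0]
    rw [Finset.sum_powerset_insert (notMem_erase 0 _), Finset.sum_add_distrib]
  rw [hGdef, hfilter, hsplit, Finset.mul_sum]
  refine sum_congr rfl fun T hT => ?_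
  rw [mem_powerset] at hT
  have h0T : (0 : ℕ) ∉ T := fun h => (mem_erase.mp (hT h)).1 rfl
  have hsig : sigma' a T = ∑ t ∈ T, a t := by
    rw [sigma', Finset.erase_eq_self.mpr h0T]
  have hsig' : sigma' a (insert 0 T) = ∑ t ∈ T, a t := by
    rw [sigma', Finset.erase_insert h0T]
  have hcard : (insert 0 T).card = T.card + 1 := Finset.card_insert_of_notMem h0T
  have hLt : Ltil n i j p a (insert 0 T) = Ltil n i j p a T := Ltil_insert_zero hj0 T
  have hCC : CK C₀ ≠ 0 := CK_ne_zero (prod_ne_zero_iff.mpr fun k _ => qfac_ne_zero _)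
  rw [hF]
  simp only [if_neg h0T, if_pos (mem_insert_self 0 T), hsig, hsig', hcard, hLt]
  rw [trm]
  simp only [map_div₀, map_mul, map_pow, map_neg, map_one]
  ring
end Restructure

/-- For `T₀ ⊆ I = I₀ \ {0}` and `w = a - σ(T₀)`:
`G(q^{-(w+1)}) = ∑_T (-1)^{w+|T|} q^{L*(T)} (q)_w (q)_{a-w} / ((q)_{a₁}⋯(q)_{aₙ})`,
the sum over all `T ⊆ I` with `σ(T) = σ(T₀)`. -/
theorem G_eval_at_extra_points (n m ν : ℕ) (i : Fin m → ℕ) (j p : Fin ν → ℕ)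
    (hm : 0 < m)
    (hi_mono : StrictMono i) (hi0 : i ⟨0, hm⟩ = 0) (hin : ∀ k, i k < n)
    (hj_mono : StrictMono j) (hj0 : ∀ k, 0 < j k) (hjn : ∀ k, j k ≤ n)
    (hij : ∀ k l, i k ≠ j l)
    (hp : ∀ k, 0 < p k) (hpm : ∑ k, p k = m)
    (a : ℕ → ℕ) (T₀ : Finset ℕ)
    (hT₀ : T₀ ⊆ (Finset.image i univ).erase 0) :
    RatFunc.eval (RingHom.id K)
        (q ^ (-(((∑ t ∈ Icc 1 n, a t) - (∑ t ∈ T₀, a t) : ℕ) + 1 : ℤ)))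
        (G n i j p a) =
      ∑ T ∈ ((Finset.image i univ).erase 0).powerset.filter
          (fun T => ∑ t ∈ T, a t = ∑ t ∈ T₀, a t),
        (-1 : K) ^ ((∑ t ∈ Icc 1 n, a t) - (∑ t ∈ T₀, a t) + T.card) *
          q ^ Lstar n i j p a ((∑ t ∈ Icc 1 n, a t) - (∑ t ∈ T₀, a t)) T *
          qfac ((∑ t ∈ Icc 1 n, a t) - (∑ t ∈ T₀, a t)) *
          qfac ((∑ t ∈ Icc 1 n, a t) - ((∑ t ∈ Icc 1 n, a t) - (∑ t ∈ T₀, a t))) /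
          ∏ k ∈ Icc 1 n, qfac (a k) := by
  classical
  set A := ∑ t ∈ Icc 1 n, a t with hA
  set s₀ := ∑ t ∈ T₀, a t with hs₀def
  set C₀ := ∏ k ∈ Icc 1 n, qfac (a k) with hC₀
  set I := (Finset.image i univ).erase 0 with hIdef
  have h0mem : (0 : ℕ) ∈ Finset.image i univ := mem_image.mpr ⟨⟨0, hm⟩, mem_univ _, hi0⟩
  have hIsub : I ⊆ Icc 1 n := by
    intro t ht
    rw [hIdef, mem_erase, mem_image] at ht
    obtain ⟨hne, k, _, hk⟩ := ht
    have := hin k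
    rw [mem_Icc]
    omega
  have hs₀A : s₀ ≤ A :=
    Finset.sum_le_sum_of_subset (hT₀.trans hIsub)
  have hC0ne : C₀ ≠ 0 := prod_ne_zero_iff.mpr fun k _ => qfac_ne_zero _
  rw [G_eq hj0 h0mem]
  have hEv : ∀ T ∈ I.powerset,
      Ev (q ^ (-((A - s₀ : ℕ) + 1 : ℤ)))
        (CK ((-1) ^ T.card * q ^ Ltil n i j p a T / C₀) *
          (NN A * trm A (∑ t ∈ T, a t)))
        (((-1) ^ T.card * q ^ Ltil n i j p a T / C₀) *
          (if (∑ t ∈ T, a t) = s₀ then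
            (-1) ^ (A - s₀) *
              q ^ (-((A - s₀ : ℕ) + 1 : ℤ) - (Nat.choose (A - s₀ + 1) 2 : ℤ)) *
              qfac (A - s₀) * qfac (∑ t ∈ T, a t)
          else 0)) := by
    intro T hT
    exact (Ev_C _).mul
      (main_ev A s₀ (∑ t ∈ T, a t)
        (Finset.sum_le_sum_of_subset ((mem_powerset.mp hT).trans hIsub)) hs₀A)
  rw [(Ev_sum hEv).eval]
  simp only [mul_ite, mul_zero]
  rw [← Finset.sum_filter]
  refine sum_congr rfl fun T hT => ?_
  rw [mem_filter, mem_powerset] at hT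
  obtain ⟨hTsub, hs⟩ := hT
  have hLt := Ltil_eq_Lstar (i := i) (j := j) (p := p) (a := a) h0mem (A - s₀) T
    (hTsub.trans hIsub)
  have hcastA : (∑ t ∈ Icc 1 n, (a t : ℤ)) = (A : ℤ) := by
    rw [hA]; push_cast; rfl
  have hcastT : (∑ t ∈ T, (a t : ℤ)) = (s₀ : ℤ) := by
    rw [← hs]; push_cast; rfl
  rw [hcastA, hcastT] at hLt
  have hkey : q ^ Ltil n i j p a T *
      q ^ (-((A - s₀ : ℕ) + 1 : ℤ) - (Nat.choose (A - s₀ + 1) 2 : ℤ)) =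
      q ^ Lstar n i j p a (A - s₀) T := by
    rw [← zpow_add₀ q_ne_zero]
    congr 1
    have he : ((A - s₀ : ℕ) : ℤ) = (A : ℤ) - (s₀ : ℤ) := Nat.cast_sub hs₀A
    linarith [hLt, he]
  have hAw : A - (A - s₀) = s₀ := by omega
  rw [hs, hAw, pow_add]
  linear_combination ((-1 : K) ^ T.card * (-1 : K) ^ (A - s₀) * qfac (A - s₀) * qfac s₀ / C₀) * hkey

end
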